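/- arXiv:2506.14639 — 2 statements merged into one kernel-verified Lean document; each statement's English description precedes it below -/
import Mathlib

section
/- Let Ω ⊆ ℝ^n be an open set with more than one point that satisfies the interior corkscrew condition with constant κ ∈ (0,1). Let x ∈ ∂Ω, let r₀ > 0, and let u : Ω → ℝ be Lebesgue integrable on B(x,r₀) ∩ Ω. If a, b ∈ ℝ both satisfy lim_{r→0+} r^{−n} ∫_{B(x,r)∩Ω} |u(y) − c| dy = 0 (with c = a and with c = b respectively), then a = b. In other words, under the interior corkscrew condition, at each boundary point there is at most one real number f(x) such that the boundary trace condition holds at x. -/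
open MeasureTheory Metric Set ENNReal

noncomputable section

abbrev Eucl (n : ℕ) := EuclideanSpace ℝ (Fin n)

/-- The interior corkscrew condition with constant `κ`. -/
def CorkscrewCond {n : ℕ} (κ : ℝ) (Ω : Set (Eucl n)) : Prop :=
  ∀ x ∈ frontier Ω, ∀ r : ℝ, 0 < r → ENNReal.ofReal r < EMetric.diam Ω →
    ∃ z ∈ ball x r, ball z (κ * r) ⊆ Ω

/-- under the interior corkscrew condition, at each boundary point there is
at most one value for which the boundary trace condition holds. -/
theorem statement4
    (n : ℕ) (Ω : Set (Eucl n)) (hΩopen : IsOpen Ω) (hΩnt : Ω.Nontrivial)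
    (κ : ℝ) (hκ : κ ∈ Set.Ioo (0:ℝ) 1) (hcs : CorkscrewCond κ Ω)
    (x : Eucl n) (hx : x ∈ frontier Ω) (r₀ : ℝ) (hr₀ : 0 < r₀)
    (u : Eucl n → ℝ) (hu : IntegrableOn u (ball x r₀ ∩ Ω))
    (a b : ℝ)
    (ha : Filter.Tendsto (fun r : ℝ => (r ^ n)⁻¹ * ∫ y in ball x r ∩ Ω, |u y - a|)
      (nhdsWithin 0 (Set.Ioi 0)) (nhds 0))
    (hb : Filter.Tendsto (fun r : ℝ => (r ^ n)⁻¹ * ∫ y in ball x r ∩ Ω, |u y - b|)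
      (nhdsWithin 0 (Set.Ioi 0)) (nhds 0)) :
    a = b := by
  -- the case n = 0 is impossible since Ω is nontrivial
  rcases Nat.eq_zero_or_pos n with hn | hn
  · subst hn
    haveI : Subsingleton (Eucl 0) := ⟨fun p q => PiLp.ext fun i => (i : Fin 0).elim0⟩
    obtain ⟨p, -, q, -, hpq⟩ := hΩnt
    exact absurd (Subsingleton.elim p q) hpq
  -- the diameter of Ω is positive
  obtain ⟨p, hp, q, hq, hpq⟩ := hΩnt
  have hdiam : (0 : ℝ≥0∞) < edist p q := by
    simpa [edist_pos] using hpq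
  set d : ℝ := (edist p q).toReal with hd
  have hd0 : 0 < d := ENNReal.toReal_pos hdiam.ne' (edist_ne_top p q)
  have hdle : ∀ r : ℝ, r < d → ENNReal.ofReal r < EMetric.diam Ω := by
    intro r hr
    have h1 : ENNReal.ofReal r < ENNReal.ofReal d := by
      exact (ENNReal.ofReal_lt_ofReal_iff hd0).2 hr
    have h2 : ENNReal.ofReal d = edist p q := ENNReal.ofReal_toReal (edist_ne_top p q)
    calc ENNReal.ofReal r < edist p q := h2 ▸ h1
      _ ≤ EMetric.diam Ω := EMetric.edist_le_diam_of_mem hp hq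
  -- basic positivity facts
  set V : ℝ := (volume (ball (0 : Eucl n) 1)).toReal with hV
  have hVpos : 0 < V := by
    rw [hV]
    exact ENNReal.toReal_pos (measure_ball_pos volume _ one_pos).ne' measure_ball_lt_top.ne
  have hκ0 := hκ.1
  have hκ1 := hκ.2
  -- integrability of |u - c| on ball x r₀ ∩ Ω
  have hmfin : volume (ball x r₀ ∩ Ω) < ⊤ :=
    (measure_mono inter_subset_left).trans_lt measure_ball_lt_top
  have hIa : IntegrableOn (fun y => |u y - a|) (ball x r₀ ∩ Ω) :=
    (hu.sub (integrableOn_const hmfin.ne : IntegrableOn (fun _ => a) (ball x r₀ ∩ Ω))).abs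
  have hIb : IntegrableOn (fun y => |u y - b|) (ball x r₀ ∩ Ω) :=
    (hu.sub (integrableOn_const hmfin.ne : IntegrableOn (fun _ => b) (ball x r₀ ∩ Ω))).abs
  -- the comparison function
  set C : ℝ := (κ ^ n * V)⁻¹ * 2 ^ n with hC
  set f : ℝ → ℝ := fun r =>
    C * ((((2 * r) ^ n)⁻¹ * ∫ y in ball x (2 * r) ∩ Ω, |u y - a|)
      + (((2 * r) ^ n)⁻¹ * ∫ y in ball x (2 * r) ∩ Ω, |u y - b|)) with hf
  -- f tends to 0
  have hmap : Filter.Tendsto (fun r : ℝ => 2 * r) (nhdsWithin 0 (Set.Ioi 0))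
      (nhdsWithin 0 (Set.Ioi 0)) := by
    apply tendsto_nhdsWithin_of_tendsto_nhds_of_eventually_within
    · have : Filter.Tendsto (fun r : ℝ => 2 * r) (nhds 0) (nhds (2 * 0)) :=
        (continuous_const.mul continuous_id).tendsto 0
      simpa using this.mono_left nhdsWithin_le_nhds
    · filter_upwards [self_mem_nhdsWithin] with r hr
      exact Set.mem_Ioi.2 (mul_pos two_pos hr)
  have hflim : Filter.Tendsto f (nhdsWithin 0 (Set.Ioi 0)) (nhds 0) := by
    have := ((ha.comp hmap).add (hb.comp hmap)).const_mul C
    simpa [hf, Function.comp] using this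
  -- the key pointwise bound
  have hkey : ∀ᶠ r in nhdsWithin 0 (Set.Ioi 0), |a - b| ≤ f r := by
    have hmem : Set.Ioo (0:ℝ) (min (r₀ / 2) d) ∈ nhdsWithin (0:ℝ) (Set.Ioi 0) :=
      Ioo_mem_nhdsGT_of_mem ⟨le_refl 0, lt_min (by positivity) hd0⟩
    filter_upwards [hmem] with r hr
    obtain ⟨hr0, hrlt⟩ := hr
    have hrr₀ : 2 * r ≤ r₀ := by
      have := hrlt.trans_le (min_le_left _ _)
      linarith
    have hrd : ENNReal.ofReal r < EMetric.diam Ω :=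
      hdle r (hrlt.trans_le (min_le_right _ _))
    obtain ⟨z, hz, hzΩ⟩ := hcs x hx r hr0 hrd
    set s : Set (Eucl n) := ball z (κ * r) with hs
    have hsub : s ⊆ ball x (2 * r) ∩ Ω := by
      intro y hy
      refine ⟨?_, hzΩ hy⟩
      have h1 : dist y z < κ * r := hy
      have h2 : dist z x < r := hz
      have : dist y x ≤ dist y z + dist z x := dist_triangle y z x
      have : dist y x < κ * r + r := by linarith
      have hκr : κ * r ≤ r := by nlinarith
      exact mem_ball.2 (by linarith)
    have hsub₀ : ball x (2 * r) ∩ Ω ⊆ ball x r₀ ∩ Ω :=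
      inter_subset_inter_left _ (ball_subset_ball hrr₀)
    have hsubT : s ⊆ ball x r₀ ∩ Ω := hsub.trans hsub₀
    -- measure of s
    have hκr0 : 0 < κ * r := mul_pos hκ0 hr0
    haveI : Nonempty (Fin n) := ⟨⟨0, hn⟩⟩
    haveI : Nontrivial (Eucl n) := inferInstance
    have hμs : (volume s).toReal = (κ * r) ^ n * V := by
      rw [hs, Measure.addHaar_ball volume z hκr0.le, finrank_euclideanSpace_fin]
      rw [ENNReal.toReal_mul, ENNReal.toReal_ofReal (by positivity)]
    -- integral inequality on s
    have hIa' : IntegrableOn (fun y => |u y - a|) s := hIa.mono_set hsubT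
    have hIb' : IntegrableOn (fun y => |u y - b|) s := hIb.mono_set hsubT
    have hmsS : MeasurableSet s := measurableSet_ball
    have hμsfin : volume s < ⊤ := measure_ball_lt_top
    have hconst : IntegrableOn (fun _ => |a - b|) s :=
      integrableOn_const hμsfin.ne
    have hptwise : ∀ y ∈ s, |a - b| ≤ |u y - a| + |u y - b| := by
      intro y _
      have h1 : |a - b| = |(u y - b) - (u y - a)| := by
        congr 1; ring
      calc |a - b| = |(u y - b) - (u y - a)| := h1
        _ ≤ |u y - b| + |u y - a| := abs_sub _ _
        _ = |u y - a| + |u y - b| := by ring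
    have hstep1 : |a - b| * ((κ * r) ^ n * V)
        ≤ (∫ y in s, |u y - a|) + ∫ y in s, |u y - b| := by
      have h1 : ∫ _ in s, |a - b| ∂volume = (volume s).toReal * |a - b| := by
        rw [setIntegral_const, smul_eq_mul]; rfl
      have h2 : (∫ _ in s, |a - b| ∂volume)
          ≤ ∫ y in s, (|u y - a| + |u y - b|) :=
        setIntegral_mono_on hconst (hIa'.add hIb') hmsS hptwise
      have h3 : (∫ y in s, (|u y - a| + |u y - b|))
          = (∫ y in s, |u y - a|) + ∫ y in s, |u y - b| :=
        integral_add hIa' hIb'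
      calc |a - b| * ((κ * r) ^ n * V) = (volume s).toReal * |a - b| := by
            rw [hμs]; ring
        _ = ∫ _ in s, |a - b| ∂volume := h1.symm
        _ ≤ _ := h2.trans_eq h3
    have hstep2 : (∫ y in s, |u y - a|) ≤ ∫ y in ball x (2 * r) ∩ Ω, |u y - a| :=
      setIntegral_mono_set (hIa.mono_set hsub₀)
        (Filter.Eventually.of_forall fun y => abs_nonneg _) hsub.eventuallyLE
    have hstep3 : (∫ y in s, |u y - b|) ≤ ∫ y in ball x (2 * r) ∩ Ω, |u y - b| :=
      setIntegral_mono_set (hIb.mono_set hsub₀)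
        (Filter.Eventually.of_forall fun y => abs_nonneg _) hsub.eventuallyLE
    set S : ℝ := (∫ y in ball x (2 * r) ∩ Ω, |u y - a|)
      + ∫ y in ball x (2 * r) ∩ Ω, |u y - b| with hS
    have hkey2 : |a - b| * ((κ * r) ^ n * V) ≤ S :=
      hstep1.trans (add_le_add hstep2 hstep3)
    have hpos : (0:ℝ) < (κ * r) ^ n * V := by positivity
    have h4 : |a - b| ≤ S / ((κ * r) ^ n * V) := (le_div_iff₀ hpos).2 hkey2
    have h5 : S / ((κ * r) ^ n * V) = f r := by
      rw [hf, hC, hS]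
      have hκn : (κ:ℝ) ^ n ≠ 0 := by positivity
      have hrn : (r:ℝ) ^ n ≠ 0 := by positivity
      have h2n : ((2:ℝ)) ^ n ≠ 0 := by positivity
      have hVne : V ≠ 0 := hVpos.ne'
      field_simp [mul_pow]
      ring
    exact h5 ▸ h4
  -- conclude
  have habs : |a - b| ≤ 0 := ge_of_tendsto hflim hkey
  have : a - b = 0 := abs_nonpos_iff.1 habs
  linarith

end
end

section
/- Let n ≥ 2 and let Ω ⊆ ℝ^n be a nonempty bounded open set whose boundary ∂Ω is d-Ahlfors regular for some real number d with 0 < d < n. Then d ≥ n−1. -/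
open MeasureTheory Metric Set ENNReal Set.Notation Filter Topology

noncomputable section

/-- The `d`-dimensional surface measure on `Γ`: Hausdorff measure `ℋ^d` restricted to `Γ`. -/
def sMeasure {n : ℕ} (d : ℝ) (Γ : Set (Eucl n)) : Measure (Eucl n) := (μH[d]).restrict Γ

/-- `Γ` is `d`-Ahlfors regular with constant `𝒜`, for radii `r` with `ofReal r < R`. -/
def AhlforsRegularWithin {n : ℕ} (d 𝒜 : ℝ) (Γ : Set (Eucl n)) (R : ℝ≥0∞) : Prop :=
  ∀ x ∈ Γ, ∀ r : ℝ, 0 < r → ENNReal.ofReal r < R →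
    ENNReal.ofReal (𝒜⁻¹ * r ^ d) ≤ sMeasure d Γ (ball x r) ∧
      sMeasure d Γ (ball x r) ≤ ENNReal.ofReal (𝒜 * r ^ d)

lemma aux_frontier {X : Type*} [TopologicalSpace X] {s Ω : Set X}
    (hs : IsPreconnected s) (hΩ : IsOpen Ω) (h1 : (s ∩ Ω).Nonempty) (h2 : ¬ s ⊆ Ω) :
    (s ∩ frontier Ω).Nonempty := by
  by_contra h
  rw [Set.not_nonempty_iff_eq_empty] at h
  have hdisj : Disjoint (frontier Ω) s := by
    rw [Set.disjoint_iff_inter_eq_empty, Set.inter_comm]; exact h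
  have hclopen : IsClopen (s ↓∩ Ω) := isClopen_preimage_val hΩ hdisj
  have : PreconnectedSpace s := Subtype.preconnectedSpace hs
  obtain ⟨x, hxs, hxΩ⟩ := h1
  have huniv : s ↓∩ Ω = Set.univ := hclopen.eq_univ ⟨⟨x, hxs⟩, hxΩ⟩
  apply h2
  intro y hy
  have : (⟨y, hy⟩ : s) ∈ s ↓∩ Ω := huniv ▸ Set.mem_univ _
  exact this

lemma ray_hits_frontier {n : ℕ} {Ω : Set (Eucl n)} (hΩopen : IsOpen Ω)
    (hΩbdd : Bornology.IsBounded Ω) {p : Eucl n} (hp : p ∈ Ω) {v : Eucl n} (hv : v ≠ 0) :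
    ∃ t : ℝ, 0 < t ∧ p + t • v ∈ frontier Ω := by
  set s : Set (Eucl n) := (fun t : ℝ => p + t • v) '' (Set.Ici 0) with hs_def
  have hcont : Continuous (fun t : ℝ => p + t • v) := by continuity
  have hsconn : IsPreconnected s := isPreconnected_Ici.image _ hcont.continuousOn
  have h1 : (s ∩ Ω).Nonempty := ⟨p, ⟨0, Set.self_mem_Ici, by simp⟩, hp⟩
  obtain ⟨R, hR⟩ := hΩbdd.subset_closedBall 0
  have h2 : ¬ s ⊆ Ω := by
    intro hsub
    set t : ℝ := (|R| + ‖p‖ + 1) / ‖v‖ with ht_def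
    have hvpos : (0:ℝ) < ‖v‖ := norm_pos_iff.mpr hv
    have ht0 : 0 ≤ t := by positivity
    have hmem : p + t • v ∈ s := ⟨t, ht0, rfl⟩
    have := hR (hsub hmem)
    rw [mem_closedBall, dist_zero_right] at this
    have hge : t * ‖v‖ - ‖p‖ ≤ ‖p + t • v‖ := by
      have := norm_sub_norm_le (t • v) (-p)
      simp only [norm_neg, norm_smul, Real.norm_eq_abs, abs_of_nonneg ht0] at this
      calc t * ‖v‖ - ‖p‖ ≤ ‖t • v - -p‖ := by
            simpa [norm_smul, abs_of_nonneg ht0] using this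
        _ = ‖p + t • v‖ := by rw [sub_neg_eq_add, add_comm]
    have htv : t * ‖v‖ = |R| + ‖p‖ + 1 := by
      rw [ht_def, div_mul_cancel₀ _ hvpos.ne']
    nlinarith [abs_nonneg R, le_abs_self R, norm_nonneg p]
  obtain ⟨x, ⟨t, ht0, hxt⟩, hxf⟩ := aux_frontier hsconn hΩopen h1 h2
  rw [← hxt] at hxf
  refine ⟨t, ?_, hxf⟩
  rcases lt_or_eq_of_le (Set.mem_Ici.mp ht0) with h | h
  · exact h
  · exfalso
    rw [hΩopen.frontier_eq] at hxf
    apply hxf.2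
    rw [← h]
    simpa using hp

def projCLM (n : ℕ) : Eucl n →L[ℝ] Eucl (n-1) :=
  LinearMap.toContinuousLinearMap <|
    ((WithLp.linearEquiv 2 ℝ (Fin (n-1) → ℝ)).symm.toLinearMap.comp
      ((LinearMap.funLeft ℝ ℝ (Fin.castLE (Nat.sub_le n 1))).comp
        (WithLp.linearEquiv 2 ℝ (Fin n → ℝ)).toLinearMap))

lemma projCLM_apply {n : ℕ} (x : Eucl n) (i : Fin (n - 1)) :
    projCLM n x i = x (Fin.castLE (Nat.sub_le n 1) i) := rfl

lemma projCLM_surjective (n : ℕ) : Function.Surjective (projCLM n) := by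
  intro y
  refine ⟨WithLp.toLp 2 (fun j : Fin n => if h : (j : ℕ) < n - 1 then y ⟨j, h⟩ else 0 : Fin n → ℝ), ?_⟩
  ext i
  rw [projCLM_apply]
  simp only [PiLp.toLp_apply, Fin.coe_castLE, i.isLt, dif_pos]

lemma projCLM_single {n : ℕ} (j : Fin n) (hj : (j : ℕ) = n - 1) :
    projCLM n (EuclideanSpace.single j (1 : ℝ)) = 0 := by
  ext i
  rw [projCLM_apply]
  rw [EuclideanSpace.single_apply]
  have : (Fin.castLE (Nat.sub_le n 1) i : Fin n) ≠ j := by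
    intro h
    have h2 := congrArg Fin.val h
    simp only [Fin.coe_castLE] at h2
    omega
  simp [this]

/-- a nonempty bounded open set in `ℝ^n` has boundary of dimension at least
`n - 1`; i.e., if its boundary is `d`-Ahlfors regular with `0 < d < n`, then `d ≥ n - 1`. -/
theorem statement5
    (n : ℕ) (hn : 2 ≤ n) (Ω : Set (Eucl n)) (hΩopen : IsOpen Ω) (hΩne : Ω.Nonempty)
    (hΩbdd : Bornology.IsBounded Ω)
    (d : ℝ) (hd0 : 0 < d) (hdn : d < n)
    (𝒜 : ℝ) (h𝒜 : 1 ≤ 𝒜)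
    (hAR : AhlforsRegularWithin d 𝒜 (frontier Ω) (EMetric.diam (frontier Ω))) :
    (n : ℝ) - 1 ≤ d := by
  set Γ := frontier Ω with hΓ
  obtain ⟨p, hp⟩ := hΩne
  have hn1 : n - 1 < n := by omega
  set j : Fin n := ⟨n - 1, hn1⟩ with hj_def
  set v : Eucl n := EuclideanSpace.single j (1 : ℝ) with hv_def
  have hv : v ≠ 0 := by
    intro h
    have := congrArg (fun w : Eucl n => w j) h
    simp [hv_def, EuclideanSpace.single_apply] at this
  -- frontier is bounded, measurable, compact
  have hΓbdd : Bornology.IsBounded Γ := hΩbdd.closure.subset frontier_subset_closure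
  have hΓmeas : MeasurableSet Γ := isClosed_frontier.measurableSet
  have hΓcomp : IsCompact Γ := isCompact_of_isClosed_isBounded isClosed_frontier hΓbdd
  -- diameter is positive
  obtain ⟨t₁, ht₁, hq₁⟩ := ray_hits_frontier hΩopen hΩbdd hp hv
  obtain ⟨t₂, ht₂, hq₂⟩ := ray_hits_frontier hΩopen hΩbdd hp (neg_ne_zero.mpr hv)
  have hδpos : 0 < EMetric.diam Γ := by
    rw [pos_iff_ne_zero]
    intro h0
    have hsub := EMetric.diam_eq_zero_iff.mp h0
    have heq : p + t₁ • v = p + t₂ • (-v) := hsub hq₁ hq₂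
    have : t₁ • v = (-t₂) • v := by
      rw [neg_smul, ← smul_neg]
      exact add_left_cancel heq
    have := smul_left_injective ℝ hv this
    linarith
  have hδtop : EMetric.diam Γ ≠ ⊤ := hΓbdd.ediam_ne_top
  set r : ℝ := (EMetric.diam Γ).toReal / 2 with hr_def
  have hr0 : 0 < r := by
    have := ENNReal.toReal_pos hδpos.ne' hδtop
    positivity
  have hrδ : ENNReal.ofReal r < EMetric.diam Γ := by
    have h2 : ENNReal.ofReal r = EMetric.diam Γ / 2 := by
      rw [hr_def, ENNReal.ofReal_div_of_pos (by norm_num), ENNReal.ofReal_toReal hδtop]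
      norm_num
    rw [h2]
    exact ENNReal.half_lt_self hδpos.ne' hδtop
  -- finite d-dimensional measure
  obtain ⟨t, htΓ, hcover⟩ :=
    hΓcomp.elim_nhds_subcover (fun x => ball x r) (fun x _ => ball_mem_nhds x hr0)
  have hfin : μH[d] Γ ≠ ⊤ := by
    have hle : μH[d] Γ ≤ ∑ x ∈ t, sMeasure d Γ (ball x r) := by
      calc μH[d] Γ = sMeasure d Γ (⋃ x ∈ t, ball x r) := by
            rw [sMeasure, Measure.restrict_apply' hΓmeas, Set.inter_eq_right.mpr hcover]
        _ ≤ ∑ x ∈ t, sMeasure d Γ (ball x r) := measure_biUnion_finset_le _ _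
    refine ne_top_of_le_ne_top ?_ hle
    refine (ENNReal.sum_lt_top.mpr fun x hx => ?_).ne
    exact lt_of_le_of_lt (hAR x (htΓ x hx) r hr0 hrδ).2 ENNReal.ofReal_lt_top
  have hupper : dimH Γ ≤ ENNReal.ofReal d := by
    have hfin' : μH[((d.toNNReal : ℝ))] Γ ≠ ⊤ := by
      rw [Real.coe_toNNReal d hd0.le]; exact hfin
    exact dimH_le_of_hausdorffMeasure_ne_top hfin'
  -- lower bound via projection
  set L := projCLM n with hL_def
  have hLsurj : Function.Surjective L := projCLM_surjective n
  have hLv : L v = 0 := projCLM_single j rfl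
  have himg : L '' Ω ⊆ L '' Γ := by
    rintro _ ⟨q, hq, rfl⟩
    obtain ⟨s, hs0, hsf⟩ := ray_hits_frontier hΩopen hΩbdd hq hv
    exact ⟨q + s • v, hsf, by simp [map_add, L.map_smul, hLv]⟩
  have hnhds : L '' Γ ∈ 𝓝 (L p) :=
    Filter.mem_of_superset ((L.isOpenMap hLsurj).image_mem_nhds (hΩopen.mem_nhds hp)) himg
  have hlow : dimH (L '' Γ) = ((n - 1 : ℕ) : ℝ≥0∞) := by
    rw [Real.dimH_of_mem_nhds hnhds, finrank_euclideanSpace_fin]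
  have hchain : ((n - 1 : ℕ) : ℝ≥0∞) ≤ ENNReal.ofReal d :=
    hlow ▸ (L.lipschitz.dimH_image_le Γ).trans hupper
  rw [← ENNReal.ofReal_natCast, ENNReal.ofReal_le_ofReal_iff hd0.le] at hchain
  have : ((n - 1 : ℕ) : ℝ) ≤ d := hchain
  rw [Nat.cast_sub (by omega : 1 ≤ n)] at this
  simpa using this


end
end
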